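/- For every integer n ≥ 5, setting θ = π/(4n−2), d₁ = sin((2n−5)θ)/sin θ, d₂ = sin((2n−3)θ)/sin θ, and d₃ = 1/(2 sin θ), there exist no nonnegative real numbers α, β such that both α² + β² = 1 − 2·d₁·d₃/d₂² and √(d₁·d₃)·d₃/d₂² ≤ α·√(d₁·d₃)/d₂ + β·d₃/d₂ hold. -/

import Mathlib

private lemma stmt_5_aux (v : ℝ) (h0 : 0 ≤ v) (h1 : v < 0.1225)
    (h6 : (1 - 2*v) / 8 ≤ ((1 - v) - (1 - 2*v)) * (2*(1 - 2*v) + 1) / 4) :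
    False := by nlinarith [sq_nonneg v]



/-- For `n ≥ 5`, with `θ = π/(4n−2)`, `d₁ = sin((2n−5)θ)/sin θ`,
`d₂ = sin((2n−3)θ)/sin θ`, `d₃ = 1/(2 sin θ)`, there are no nonnegative reals
`α, β` with `α² + β² = 1 − 2d₁d₃/d₂²` and
`√(d₁d₃)·d₃/d₂² ≤ α·√(d₁d₃)/d₂ + β·d₃/d₂`. -/
theorem stmt_5 (n : ℤ) (hn : 5 ≤ n)
    (θ d₁ d₂ d₃ : ℝ)
    (hθ : θ = Real.pi / (4 * (n : ℝ) - 2))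
    (hd₁ : d₁ = Real.sin ((2 * (n : ℝ) - 5) * θ) / Real.sin θ)
    (hd₂ : d₂ = Real.sin ((2 * (n : ℝ) - 3) * θ) / Real.sin θ)
    (hd₃ : d₃ = 1 / (2 * Real.sin θ)) :
    ¬ ∃ α β : ℝ, 0 ≤ α ∧ 0 ≤ β ∧
      α ^ 2 + β ^ 2 = 1 - 2 * d₁ * d₃ / d₂ ^ 2 ∧
      Real.sqrt (d₁ * d₃) * d₃ / d₂ ^ 2 ≤
        α * Real.sqrt (d₁ * d₃) / d₂ + β * d₃ / d₂ := by
  rintro ⟨α, β, hα, hβ, hsum, hineq⟩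
  have hn' : (5:ℝ) ≤ (n:ℝ) := by exact_mod_cast hn
  have hπ := Real.pi_pos
  have hπ315 : Real.pi < 3.15 := Real.pi_lt_d2
  have hdenpos : (0:ℝ) < 4 * (n:ℝ) - 2 := by linarith
  have hden : (18:ℝ) ≤ 4 * (n:ℝ) - 2 := by linarith
  have hθpos : 0 < θ := by rw [hθ]; positivity
  have hθle : θ ≤ Real.pi / 18 := by
    rw [hθ]
    exact div_le_div_of_nonneg_left hπ.le (by norm_num) hden
  have hdne : (4 * (n:ℝ) - 2) ≠ 0 := ne_of_gt hdenpos
  have e1 : (2*(n:ℝ)-5)*θ = Real.pi/2 - 4*θ := by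
    rw [hθ]; linear_combination (Real.pi/2) * mul_inv_cancel₀ hdne
  have e2 : (2*(n:ℝ)-3)*θ = Real.pi/2 - 2*θ := by
    rw [hθ]; linear_combination (Real.pi/2) * mul_inv_cancel₀ hdne
  rw [e1, Real.sin_pi_div_two_sub] at hd₁
  rw [e2, Real.sin_pi_div_two_sub] at hd₂
  set s := Real.sin θ with hs_def
  set c2 := Real.cos (2*θ) with hc2_def
  set c4 := Real.cos (4*θ) with hc4_def
  set u := Real.sin (2*θ) with hu_def
  have hs : 0 < s := Real.sin_pos_of_pos_of_lt_pi hθpos (by linarith)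
  have hu0 : 0 < u := Real.sin_pos_of_pos_of_lt_pi (by linarith) (by linarith)
  have hu35 : u < 0.35 := by
    have h := Real.sin_lt (show (0:ℝ) < 2*θ by linarith)
    rw [← hu_def] at h
    linarith
  have hu2 : u^2 < 0.1225 := by
    have h := mul_self_lt_mul_self hu0.le hu35
    calc u^2 = u*u := sq u
    _ < 0.35*0.35 := h
    _ = 0.1225 := by norm_num
  have hpy : c2^2 = 1 - u^2 := Real.cos_sq' (2*θ)
  have hc4 : c4 = 1 - 2*u^2 := by
    have h4 : (4:ℝ)*θ = 2*(2*θ) := by ring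
    rw [hc4_def, h4, Real.cos_two_mul, Real.cos_sq']
    rw [← hu_def]; ring
  have hc2pos : 0 < c2 := Real.cos_pos_of_mem_Ioo ⟨by linarith, by linarith⟩
  have hc4pos : 0 < c4 := by rw [hc4]; linarith
  have hd₁pos : 0 < d₁ := by rw [hd₁]; positivity
  have hd₂pos : 0 < d₂ := by rw [hd₂]; positivity
  have hd₃pos : 0 < d₃ := by rw [hd₃]; positivity
  have hd₂ne : d₂ ≠ 0 := ne_of_gt hd₂pos
  set r := Real.sqrt (d₁*d₃) with hr_def
  have hr0 : 0 ≤ r := Real.sqrt_nonneg _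
  have hr2 : r^2 = d₁*d₃ := Real.sq_sqrt (by positivity)
  have h1 : r * d₃ ≤ (α*r + β*d₃) * d₂ := by
    calc r * d₃ = r * d₃ / d₂^2 * d₂^2 := by field_simp
    _ ≤ (α*r/d₂ + β*d₃/d₂) * d₂^2 :=
        mul_le_mul_of_nonneg_right hineq (by positivity)
    _ = (α*r+β*d₃)*d₂ := by field_simp
  have h2 : (r*d₃)^2 ≤ ((α*r+β*d₃)*d₂)^2 :=
    pow_le_pow_left₀ (by positivity) h1 2
  have hcauchy : (α*r+β*d₃)^2 ≤ (α^2+β^2)*(r^2+d₃^2) := by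
    have hid : (α^2+β^2)*(r^2+d₃^2) - (α*r+β*d₃)^2 = (α*d₃-β*r)^2 := by ring
    have hnn := sq_nonneg (α*d₃-β*r)
    linarith
  have h3 : (r*d₃)^2 ≤ (α^2+β^2)*(r^2+d₃^2)*d₂^2 := by
    calc (r*d₃)^2 ≤ ((α*r+β*d₃)*d₂)^2 := h2
    _ = (α*r+β*d₃)^2 * d₂^2 := by ring
    _ ≤ (α^2+β^2)*(r^2+d₃^2)*d₂^2 :=
        mul_le_mul_of_nonneg_right hcauchy (sq_nonneg d₂)
  have h5 : d₁*d₃*d₃^2 ≤ (d₂^2 - 2*d₁*d₃)*(d₁*d₃+d₃^2) := by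
    calc d₁*d₃*d₃^2 = (r*d₃)^2 := by rw [mul_pow, hr2]
    _ ≤ (α^2+β^2)*(r^2+d₃^2)*d₂^2 := h3
    _ = (d₂^2 - 2*d₁*d₃)*(d₁*d₃+d₃^2) := by
        rw [hsum, hr2]; field_simp
  rw [hd₁, hd₂, hd₃] at h5
  have h6 : c4 / 8 ≤ (c2^2 - c4) * (2*c4 + 1) / 4 := by
    have hmul := mul_le_mul_of_nonneg_right h5
      (le_of_lt (show (0:ℝ) < s^4 by positivity))
    have eL : c4/s*(1/(2*s))*(1/(2*s))^2 * s^4 = c4/8 := by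
      field_simp; ring
    have eR : ((c2/s)^2 - 2*(c4/s)*(1/(2*s)))*((c4/s)*(1/(2*s)) + (1/(2*s))^2) * s^4
        = (c2^2 - c4)*(2*c4+1)/4 := by
      field_simp; ring
    rw [eL, eR] at hmul
    exact hmul
  rw [hpy, hc4] at h6
  exact stmt_5_aux (u^2) (sq_nonneg u) hu2 h6
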